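/- Let F_e : 2^V → ℝ_+ (e ∈ E) be nonnegative submodular functions with F_e(∅) = F_e(V) = 0, and let b ∈ ℝ^V. The system: 'there exists φ ≥ 0 in ℝ^E such that Σ_e φ(e) F_e(X) ≥ b(X) for all X ⊆ V' is feasible if and only if b(S) ≤ 0 for every S ∈ ker(F), where ker(F) = { S ⊆ V : F_e(S) = 0 for all e ∈ E }. -/

import Mathlib

open scoped BigOperators

/-- The system `∃ φ ≥ 0, Σ_e φ(e) F_e(X) ≥ b(X) for all X` is feasible iff
`b(S) ≤ 0` for every `S ∈ ker(F)`. -/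
theorem laplacian_system_feasibility {V E : Type*} [Fintype V] [DecidableEq V] [Fintype E]
    (F : E → Finset V → ℝ)
    (hsub : ∀ e (S T : Finset V), F e (S ∪ T) + F e (S ∩ T) ≤ F e S + F e T)
    (hnn : ∀ e S, 0 ≤ F e S)
    (h0 : ∀ e, F e ∅ = 0) (hV : ∀ e, F e Finset.univ = 0)
    (b : V → ℝ) :
    (∃ φ : E → ℝ, (∀ e, 0 ≤ φ e) ∧
      ∀ X : Finset V, (∑ v ∈ X, b v) ≤ ∑ e, φ e * F e X) ↔
    (∀ S : Finset V, (∀ e, F e S = 0) → (∑ v ∈ S, b v) ≤ 0) := by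
  constructor
  · rintro ⟨φ, hφ, h⟩ S hS
    have := h S
    simpa [hS] using this
  · intro hker
    set G : Finset V → ℝ := fun X => ∑ e, F e X with hG
    have hGnn : ∀ X, 0 ≤ G X := fun X => Finset.sum_nonneg fun e _ => hnn e X
    have hGzero : ∀ X, G X = 0 ↔ ∀ e, F e X = 0 := by
      intro X
      rw [hG]
      constructor
      · intro hz e
        have := (Finset.sum_eq_zero_iff_of_nonneg (fun e _ => hnn e X)).mp hz
        exact this e (Finset.mem_univ e)
      · intro hz
        exact Finset.sum_eq_zero fun e _ => hz e
    -- choose M large enough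
    have hne : (Finset.univ : Finset (Finset V)).Nonempty := Finset.univ_nonempty
    set M0 : ℝ := Finset.univ.sup' hne (fun X : Finset V =>
      if G X = 0 then 0 else (∑ v ∈ X, b v) / G X) with hM0
    set M : ℝ := max M0 0 with hM
    refine ⟨fun _ => M, fun _ => le_max_right _ _, ?_⟩
    intro X
    have hsum : ∑ e, M * F e X = M * G X := by
      rw [hG, Finset.mul_sum]
    rw [hsum]
    by_cases hz : G X = 0
    · have : (∑ v ∈ X, b v) ≤ 0 := hker X ((hGzero X).mp hz)
      simpa [hz] using this
    · have hpos : 0 < G X := lt_of_le_of_ne (hGnn X) (Ne.symm hz)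
      have hle : (∑ v ∈ X, b v) / G X ≤ M0 := by
        have := Finset.le_sup' (fun X : Finset V =>
          if G X = 0 then 0 else (∑ v ∈ X, b v) / G X) (Finset.mem_univ X)
        simpa only [hz, ↓reduceIte, hM0] using this
      have : (∑ v ∈ X, b v) / G X ≤ M := hle.trans (le_max_left _ _)
      calc (∑ v ∈ X, b v) = ((∑ v ∈ X, b v) / G X) * G X := by field_simp
        _ ≤ M * G X := mul_le_mul_of_nonneg_right this hpos.le
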